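/- Let R be a perfect F_p-algebra. If 0 → M' → M → M'' → 0 is a short exact sequence of R[F^{±1}]-modules, then M is algebraic if and only if both M' and M'' are algebraic. -/

import Mathlib

/-- An element `x` of a module `M` over `R` equipped with a (Frobenius-semilinear) operator
`F : M → M` is *algebraic* if it satisfies a monic equation
`F^n x + a₁ F^{n-1} x + ⋯ + aₙ x = 0` with `aᵢ ∈ R`. -/
def IsAlgebraicElt (R : Type*) {M : Type*} [CommRing R] [AddCommGroup M] [Module R M]
    (F : M → M) (x : M) : Prop :=
  ∃ n, 0 < n ∧ ∃ a : Fin n → R, F^[n] x + ∑ i : Fin n, a i • F^[n - 1 - i.1] x = 0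

section Aux

variable {R M N : Type*} [CommRing R] [AddCommGroup M] [Module R M]
  [AddCommGroup N] [Module R N]

lemma aux_it_add {F : M → M} (h : ∀ x y, F (x + y) = F x + F y) (k : ℕ) :
    ∀ x y : M, F^[k] (x + y) = F^[k] x + F^[k] y := by
  induction k with
  | zero => simp
  | succ k ih =>
    intro x y
    rw [Function.iterate_succ_apply', Function.iterate_succ_apply',
      Function.iterate_succ_apply', ih, h]

lemma aux_F_zero {F : M → M} (h : ∀ x y, F (x + y) = F x + F y) : F 0 = 0 := by
  have := h 0 0
  rw [add_zero] at this
  exact (left_eq_add.mp this)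

lemma aux_it_zero {F : M → M} (h : ∀ x y, F (x + y) = F x + F y) (k : ℕ) :
    F^[k] (0 : M) = 0 := by
  induction k with
  | zero => simp
  | succ k ih => rw [Function.iterate_succ_apply', ih, aux_F_zero h]

lemma aux_it_smul {p : ℕ} {F : M → M} (h : ∀ (a : R) (m : M), F (a • m) = a ^ p • F m)
    (k : ℕ) (a : R) (x : M) : F^[k] (a • x) = a ^ (p ^ k) • F^[k] x := by
  induction k with
  | zero => simp
  | succ k ih =>
    rw [Function.iterate_succ_apply', Function.iterate_succ_apply', ih, h, ← pow_mul,
      ← pow_succ]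

lemma aux_it_sum {F : M → M} (h : ∀ x y, F (x + y) = F x + F y) (k : ℕ)
    {ι : Type*} (s : Finset ι) (v : ι → M) :
    F^[k] (∑ i ∈ s, v i) = ∑ i ∈ s, F^[k] (v i) := by
  classical
  induction s using Finset.induction_on with
  | empty => simp [aux_it_zero h]
  | insert i s hi ih => rw [Finset.sum_insert hi, Finset.sum_insert hi, aux_it_add h, ih]

lemma aux_it_comm {G : M → M} {F : N → N} (φ : M →ₗ[R] N)
    (h : ∀ x, φ (G x) = F (φ x)) (k : ℕ) (x : M) : φ (G^[k] x) = F^[k] (φ x) := by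
  induction k with
  | zero => simp
  | succ k ih =>
    rw [Function.iterate_succ_apply', Function.iterate_succ_apply', h, ih]

lemma aux_isAlg_iff_span (F : M → M) (x : M) :
    IsAlgebraicElt R F x ↔ ∃ n, 0 < n ∧
      F^[n] x ∈ Submodule.span R (Set.range fun i : Fin n => F^[i.1] x) := by
  constructor
  · rintro ⟨n, hn, a, ha⟩
    refine ⟨n, hn, ?_⟩
    have hx : F^[n] x = ∑ i : Fin n, (-(a i)) • F^[n - 1 - i.1] x := by
      have := eq_neg_of_add_eq_zero_left ha
      rw [this, ← Finset.sum_neg_distrib]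
      exact Finset.sum_congr rfl fun i _ => (neg_smul _ _).symm
    rw [hx]
    refine Submodule.sum_mem _ fun i _ => Submodule.smul_mem _ _ ?_
    exact Submodule.subset_span ⟨⟨n - 1 - i.1, by omega⟩, rfl⟩
  · rintro ⟨n, hn, hmem⟩
    rw [Submodule.mem_span_range_iff_exists_fun] at hmem
    obtain ⟨c, hc⟩ := hmem
    refine ⟨n, hn, fun i => -(c i.rev), ?_⟩
    have hre : ∑ i : Fin n, (-(c i.rev)) • F^[n - 1 - i.1] x
        = ∑ i : Fin n, (-(c i)) • F^[i.1] x := by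
      refine Fintype.sum_bijective Fin.rev Fin.rev_bijective _ _ fun i => ?_
      have hv : (i.rev : ℕ) = n - 1 - i.1 := by rw [Fin.val_rev]; omega
      rw [hv]
    rw [hre]
    have : ∑ i : Fin n, (-(c i)) • F^[i.1] x = -(F^[n] x) := by
      rw [← hc, ← Finset.sum_neg_distrib]
      exact Finset.sum_congr rfl fun i _ => neg_smul _ _
    rw [this, add_neg_cancel]

end Aux

/-- Let `R` be a perfect `F_p`-algebra.  If `0 → M' → M → M'' → 0` is a short
exact sequence of `R[F^{±1}]`-modules (encoded as `R`-modules with additive, bijective,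
Frobenius-semilinear operators, and `R`-linear maps commuting with the operators, with `f`
injective, `g` surjective, and `ker g = im f`), then `M` is algebraic if and only if both
`M'` and `M''` are algebraic. -/
theorem stmt3 (p : ℕ) [Fact p.Prime] (R M' M M'' : Type*) [CommRing R] [CharP R p]
    [PerfectRing R p]
    [AddCommGroup M'] [Module R M'] [AddCommGroup M] [Module R M]
    [AddCommGroup M''] [Module R M'']
    (F' : M' → M') (F : M → M) (F'' : M'' → M'')
    (hF'add : ∀ x y, F' (x + y) = F' x + F' y)
    (hF'semi : ∀ (a : R) (m : M'), F' (a • m) = a ^ p • F' m)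
    (hF'bij : Function.Bijective F')
    (hFadd : ∀ x y, F (x + y) = F x + F y)
    (hFsemi : ∀ (a : R) (m : M), F (a • m) = a ^ p • F m)
    (hFbij : Function.Bijective F)
    (hF''add : ∀ x y, F'' (x + y) = F'' x + F'' y)
    (hF''semi : ∀ (a : R) (m : M''), F'' (a • m) = a ^ p • F'' m)
    (hF''bij : Function.Bijective F'')
    (f : M' →ₗ[R] M) (g : M →ₗ[R] M'')
    (hfF : ∀ x, f (F' x) = F (f x)) (hgF : ∀ x, g (F x) = F'' (g x))
    (hfinj : Function.Injective f) (hgsurj : Function.Surjective g)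
    (hexact : ∀ x : M, g x = 0 ↔ x ∈ LinearMap.range f) :
    (∀ x : M, IsAlgebraicElt R F x) ↔
      ((∀ x : M', IsAlgebraicElt R F' x) ∧ (∀ x : M'', IsAlgebraicElt R F'' x)) := by
  have hfc := aux_it_comm f hfF
  have hgc := aux_it_comm g hgF
  constructor
  · intro h
    constructor
    · intro x'
      obtain ⟨n, hn, a, ha⟩ := h (f x')
      refine ⟨n, hn, a, hfinj ?_⟩
      rw [map_zero, map_add, map_sum]
      simp only [map_smul, hfc]
      exact ha
    · intro x''
      obtain ⟨x, hx⟩ := hgsurj x''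
      obtain ⟨n, hn, a, ha⟩ := h x
      refine ⟨n, hn, a, ?_⟩
      have := congrArg g ha
      rw [map_zero, map_add, map_sum] at this
      simp only [map_smul, hgc, hx] at this
      exact this
  · rintro ⟨h', h''⟩ x
    obtain ⟨n, hn, a, ha⟩ := h'' (g x)
    set y := F^[n] x + ∑ i : Fin n, a i • F^[n - 1 - i.1] x with hy
    have hgy : g y = 0 := by
      rw [hy, map_add, map_sum]
      simp only [map_smul, hgc]
      exact ha
    obtain ⟨z, hz⟩ := (hexact y).mp hgy
    obtain ⟨m, hm, b, hb⟩ := h' z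
    have hby : F^[m] y + ∑ j : Fin m, b j • F^[m - 1 - j.1] y = 0 := by
      have := congrArg f hb
      rw [map_zero, map_add, map_sum] at this
      simp only [map_smul, hfc, hz] at this
      exact this
    rw [aux_isAlg_iff_span]
    refine ⟨m + n, by omega, ?_⟩
    set Nspan := Submodule.span R (Set.range fun i : Fin (m + n) => F^[i.1] x) with hN
    have hxmem : ∀ k, k < m + n → F^[k] x ∈ Nspan :=
      fun k hk => Submodule.subset_span ⟨⟨k, hk⟩, rfl⟩
    have hexpand : ∀ k : ℕ, F^[k] y
        = F^[k + n] x + ∑ i : Fin n, (a i) ^ (p ^ k) • F^[k + (n - 1 - i.1)] x := by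
      intro k
      rw [hy, aux_it_add hFadd, aux_it_sum hFadd, ← Function.iterate_add_apply]
      congr 1
      refine Finset.sum_congr rfl fun i _ => ?_
      rw [aux_it_smul hFsemi, ← Function.iterate_add_apply]
    have hymem : ∀ k, k + 1 ≤ m → F^[k] y ∈ Nspan := by
      intro k hk
      rw [hexpand k]
      refine add_mem (hxmem _ (by omega)) (Submodule.sum_mem _ fun i _ => ?_)
      exact Submodule.smul_mem _ _ (hxmem _ (by omega))
    have h1 : F^[m] y ∈ Nspan := by
      have hx : F^[m] y = ∑ j : Fin m, (-(b j)) • F^[m - 1 - j.1] y := by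
        have := eq_neg_of_add_eq_zero_left hby
        rw [this, ← Finset.sum_neg_distrib]
        exact Finset.sum_congr rfl fun j _ => (neg_smul _ _).symm
      rw [hx]
      exact Submodule.sum_mem _ fun j _ =>
        Submodule.smul_mem _ _ (hymem _ (by omega))
    have hfin : F^[m + n] x = F^[m] y
        - ∑ i : Fin n, (a i) ^ (p ^ m) • F^[m + (n - 1 - i.1)] x :=
      eq_sub_of_add_eq (hexpand m).symm
    rw [hfin]
    exact sub_mem h1 (Submodule.sum_mem _ fun i _ =>
      Submodule.smul_mem _ _ (hxmem _ (by omega)))
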